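/- Let F_{q0} be a subfield of the finite field F_q, let G = {1, μ_1, …, μ_{n−1}} be a subgroup of F_{q0}^* of order n, let b,c ∈ F_{q0} with b ≠ c, and set α_i = (b − μ_i c)/(1 − μ_i) for i = 1,…,n−1. If 0 < k ≤ n, λ ∈ F_{q0} \ G and η ∈ F_q \ F_{q0}^*, then the codes RCTRS_{0,1}(α,b,c,λ,η) and RCTRS_{0,1}(α,b,c,λ,η,∞) are both MDS (in particular, the α_i are pairwise distinct). -/

import Mathlib

open Polynomial Finset

noncomputable section

variable {F : Type*} [Field F]

/-- The twisted polynomial `∑_{i<k} f_i x^i + η f_h x^{k-1+t}` from `V_{k,t,h,η}`. -/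
def twPoly (k t h : ℕ) (η : F) (f : Fin k → F) : Polynomial F :=
  (∑ i : Fin k, Polynomial.C (f i) * Polynomial.X ^ (i : ℕ)) +
    Polynomial.C (η * if hh : h < k then f ⟨h, hh⟩ else 0) * Polynomial.X ^ (k - 1 + t)

/-- The coefficient `f_{k-1}` of a coefficient vector `f : Fin k → F`. -/
def topCoeffFin {k : ℕ} (f : Fin k → F) : F :=
  if hk : k - 1 < k then f ⟨k - 1, hk⟩ else 0

/-- Codewords of the row-column twisted Reed-Solomon code. -/
def rctrsWords (k t h : ℕ) (η : F) {m : ℕ} (α : Fin m → F) (b c lam : F) :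
    Set (Fin (m + 1) → F) :=
  { w | ∃ f : Fin k → F,
      w = Fin.snoc (fun i => (twPoly k t h η f).eval (α i))
            ((twPoly k t h η f).eval b - lam * (twPoly k t h η f).eval c) }

/-- The row-column twisted Reed-Solomon code `RCTRS_{h,t}(α,b,c,λ,η)`. -/
def RCTRS (k t h : ℕ) (η : F) {m : ℕ} (α : Fin m → F) (b c lam : F) :
    Submodule F (Fin (m + 1) → F) :=
  Submodule.span F (rctrsWords k t h η α b c lam)

/-- Codewords of the extended row-column twisted Reed-Solomon code. -/
def rctrsWordsExt (k t h : ℕ) (η : F) {m : ℕ} (α : Fin m → F) (b c lam : F) :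
    Set (Fin (m + 2) → F) :=
  { w | ∃ f : Fin k → F,
      w = Fin.snoc (Fin.snoc (fun i => (twPoly k t h η f).eval (α i))
            ((twPoly k t h η f).eval b - lam * (twPoly k t h η f).eval c)) (topCoeffFin f) }

/-- The extended row-column twisted Reed-Solomon code `RCTRS_{h,t}(α,b,c,λ,η,∞)`. -/
def RCTRSext (k t h : ℕ) (η : F) {m : ℕ} (α : Fin m → F) (b c lam : F) :
    Submodule F (Fin (m + 2) → F) :=
  Submodule.span F (rctrsWordsExt k t h η α b c lam)

/-- Hamming weight. -/
def wt {n : ℕ} (x : Fin n → F) : ℕ := Nat.card {i : Fin n // x i ≠ 0}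

/-- An `[n,k]` code is MDS if it has dimension `k` and minimum Hamming distance `n-k+1`. -/
def IsMDS {n : ℕ} (C : Submodule F (Fin n → F)) (k : ℕ) : Prop :=
  Module.finrank F C = k ∧ ∀ x ∈ C, x ≠ 0 → n - k + 1 ≤ wt x

/-- The Schur square of a code. -/
def schurSq {n : ℕ} (C : Submodule F (Fin n → F)) : Submodule F (Fin n → F) :=
  Submodule.span F { w | ∃ x ∈ C, ∃ y ∈ C, w = x * y }

/-- Code equivalence: a permutation of coordinates followed by nonzero coordinatewise scaling. -/
def codeEquiv {n : ℕ} (C D : Submodule F (Fin n → F)) : Prop :=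
  ∃ σ : Equiv.Perm (Fin n), ∃ v : Fin n → F, (∀ i, v i ≠ 0) ∧
    (C : Set (Fin n → F)) =
      (fun x : Fin n → F => fun i => v i * x (σ i)) '' (D : Set (Fin n → F))

/-- Generalized Reed-Solomon code. -/
def GRS (k : ℕ) {n : ℕ} (α v : Fin n → F) : Submodule F (Fin n → F) :=
  Submodule.span F
    { w | ∃ f ∈ Polynomial.degreeLT F k, w = fun i => v i * Polynomial.eval (α i) f }

/-- Extended generalized Reed-Solomon code. -/
def GRSext (k : ℕ) {n : ℕ} (α v : Fin n → F) : Submodule F (Fin (n + 1) → F) :=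
  Submodule.span F
    { w | ∃ f ∈ Polynomial.degreeLT F k,
        w = Fin.snoc (fun i => v i * Polynomial.eval (α i) f) (f.coeff (k - 1)) }

/-- A code of length `m+1` is non-RS if it is equivalent to no GRS and no extended GRS code. -/
def IsNonRS {m : ℕ} (C : Submodule F (Fin (m + 1) → F)) : Prop :=
  (∀ (k' : ℕ) (α v : Fin (m + 1) → F), Function.Injective α → (∀ i, v i ≠ 0) →
      ¬ codeEquiv C (GRS k' α v)) ∧
  (∀ (k' : ℕ) (α v : Fin m → F), Function.Injective α → (∀ i, v i ≠ 0) →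
      ¬ codeEquiv C (GRSext k' α v))

/-- Column twisted Reed-Solomon code. -/
def CTRS (k : ℕ) {m : ℕ} (α : Fin m → F) (b c lam : F) : Submodule F (Fin (m + 1) → F) :=
  Submodule.span F
    { w | ∃ f ∈ Polynomial.degreeLT F k,
        w = Fin.snoc (fun i => Polynomial.eval (α i) f)
              (Polynomial.eval b f - lam * Polynomial.eval c f) }

/-- Extended column twisted Reed-Solomon code. -/
def CTRSext (k : ℕ) {m : ℕ} (α : Fin m → F) (b c lam : F) : Submodule F (Fin (m + 2) → F) :=
  Submodule.span F
    { w | ∃ f ∈ Polynomial.degreeLT F k,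
        w = Fin.snoc (Fin.snoc (fun i => Polynomial.eval (α i) f)
              (Polynomial.eval b f - lam * Polynomial.eval c f)) (f.coeff (k - 1)) }

/-- `Φ_J(x) = ∏_{j∈J}(x−α_j)·(1 + (−1)^{|J|} η x ∏_{j∈J} α_j)`. -/
def PhiRC {m : ℕ} (α : Fin m → F) (η : F) (J : Finset (Fin m)) (x : F) : F :=
  (∏ j ∈ J, (x - α j)) * (1 + (-1 : F) ^ J.card * η * x * ∏ j ∈ J, α j)

/-- `Ψ_J(x) = ∏_{j∈J}(x−α_j)·(1 + ηx + η Σ_{j∈J} α_j)`. -/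
def PsiRC {m : ℕ} (α : Fin m → F) (η : F) (J : Finset (Fin m)) (x : F) : F :=
  (∏ j ∈ J, (x - α j)) * (1 + η * x + η * ∑ j ∈ J, α j)

/-- `Φ_{J,h}(x) = ∏_{j∈J}(x−α_j)·(1 + (−1)^{k−1−h} η σ_{k−h}(α_J, x))`. -/
def PhiRCh {m : ℕ} (α : Fin m → F) (η : F) (k h : ℕ) (J : Finset (Fin m)) (x : F) : F :=
  (∏ j ∈ J, (x - α j)) *
    (1 + (-1 : F) ^ (k - 1 - h) * η * Multiset.esymm (x ::ₘ J.val.map α) (k - h))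

/-- The image of a subgroup of `Fˣ` in `F`. -/
def unitsImage (G : Subgroup Fˣ) : Set F := (fun g : Fˣ => (g : F)) '' (G : Set Fˣ)

end

noncomputable section CoreProof
open scoped Classical
variable {F : Type*} [Field F]

lemma prod_X_sub_C_dvd_of_roots {ι : Type*} {g : F[X]} (hg : g ≠ 0) (S : Finset ι) (v : ι → F)
    (hinj : Set.InjOn v S) (hroots : ∀ j ∈ S, g.eval (v j) = 0) :
    (∏ j ∈ S, (X - C (v j))) ∣ g := by
  have h1 : (∏ j ∈ S, (X - C (v j))) = ((S.val.map v).map fun a => X - C a).prod := by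
    rw [Multiset.map_map]; rfl
  rw [h1, Multiset.prod_X_sub_C_dvd_iff_le_roots hg]
  have hnd : (S.val.map v).Nodup := Multiset.Nodup.map_on (fun x hx y hy => hinj hx hy) S.nodup
  rw [Multiset.le_iff_subset hnd]
  intro a ha
  obtain ⟨j, hj, rfl⟩ := Multiset.mem_map.mp ha
  rw [mem_roots hg]
  exact hroots j hj

lemma prod_mul_X_coeff {ι : Type*} (S : Finset ι) (v : ι → F) :
    ((∏ j ∈ S, (X - C (v j))) * X).coeff S.card = -∑ j ∈ S, v j := by
  rcases Nat.eq_zero_or_pos S.card with h0 | hpos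
  · rw [Finset.card_eq_zero.mp h0]; simp
  · obtain ⟨n, hn⟩ := Nat.exists_eq_add_of_lt hpos
    rw [show S.card = n + 1 by omega, coeff_mul_X,
      show n = S.card - 1 by omega, prod_X_sub_C_coeff_card_pred S v hpos]

lemma eq_quad (q : F[X]) (h : q.natDegree ≤ 2) :
    q = C (q.coeff 2) * X ^ 2 + C (q.coeff 1) * X + C (q.coeff 0) := by
  ext n
  rcases n with _|_|_|m
  · simp
  · simp [coeff_X_pow, coeff_C, coeff_X]
  · simp [coeff_X_pow, coeff_C, coeff_X]
  · simp [coeff_X_pow, coeff_C, coeff_X,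
      coeff_eq_zero_of_natDegree_lt (lt_of_le_of_lt h (by omega : 2 < m + 3))]

lemma eta_contra (K₀ : Subfield F) {η : F} (hη : η = 0 ∨ η ∉ K₀) {a e : F}
    (ha : a ∈ K₀) (he : e ∈ K₀) (hne : e ≠ 0) (heq : η * a = e) : False := by
  rcases hη with h | h
  · exact hne (by rw [← heq, h, zero_mul])
  · apply h
    have ha0 : a ≠ 0 := fun h0 => hne (by rw [← heq, h0, mul_zero])
    have hinv : η = e * a⁻¹ := by rw [← heq, mul_assoc, mul_inv_cancel₀ ha0, mul_one]
    rw [hinv]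
    exact K₀.mul_mem he (K₀.inv_mem ha)

lemma core (K₀ : Subfield F) (U : Set F) {m k : ℕ} (α μ : Fin m → F)
    (b c lam η : F)
    (hαK : ∀ i, α i ∈ K₀) (hμU : ∀ i, μ i ∈ U) (hμK : ∀ i, μ i ∈ K₀)
    (hrel : ∀ i, b - α i = μ i * (c - α i)) (hcne : ∀ i, c - α i ≠ 0)
    (hUmul : ∀ x ∈ U, ∀ y ∈ U, x * y ∈ U) (h1U : (1 : F) ∈ U)
    (hlamU : lam ∉ U) (hbK : b ∈ K₀) (hcK : c ∈ K₀) (hlamK : lam ∈ K₀)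
    (hη : η = 0 ∨ η ∉ K₀) (hk0 : 0 < k) (hαinj : Function.Injective α)
    (g : F[X]) (hg : g ≠ 0) (hdeg : g.natDegree ≤ k)
    (htw : g.coeff k = η * g.coeff 0)
    (S : Finset (Fin m)) (hroots : ∀ j ∈ S, g.eval (α j) = 0) :
    S.card < k ∧ (g.eval b = lam * g.eval c → S.card + 1 < k) ∧
      (g.coeff (k - 1) = 0 → S.card + 1 < k) ∧
      (g.coeff (k - 1) = 0 → g.eval b = lam * g.eval c → S.card + 2 < k) := by
  set s := S.card with hs
  set r : F[X] := ∏ j ∈ S, (X - C (α j)) with hr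
  obtain ⟨q, hgq⟩ : r ∣ g :=
    prod_X_sub_C_dvd_of_roots hg S α (Function.Injective.injOn hαinj) hroots
  have hrm : r.Monic := monic_prod_of_monic _ _ fun i _ => monic_X_sub_C _
  have hr0 : r ≠ 0 := hrm.ne_zero
  have hrdeg : r.natDegree = s := by
    rw [hr, natDegree_prod _ _ fun i _ => X_sub_C_ne_zero (α i)]
    simp [hs]
  have hq0 : q ≠ 0 := by rintro rfl; rw [mul_zero] at hgq; exact hg hgq
  have hsum : s + q.natDegree ≤ k := by
    rw [← hrdeg, ← natDegree_mul hr0 hq0, ← hgq]; exact hdeg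
  have hcardle : s ≤ k := le_trans (Nat.le_add_right _ _) hsum
  set M := ∏ j ∈ S, μ j with hM
  have hMU : M ∈ U := by
    refine Finset.prod_induction μ (· ∈ U) (fun x y hx hy => hUmul x hx y hy) h1U ?_
    exact fun i _ => hμU i
  have hMK : M ∈ K₀ := prod_mem fun i _ => hμK i
  have hlamM : lam ≠ M := fun h => hlamU (h ▸ hMU)
  have hlamM' : lam - M ≠ 0 := sub_ne_zero_of_ne hlamM
  have hrevalc : r.eval c ≠ 0 := by
    rw [hr, eval_prod]
    exact Finset.prod_ne_zero_iff.mpr fun i _ => by simpa using hcne i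
  have hrevalb : r.eval b = M * r.eval c := by
    rw [hr, eval_prod, eval_prod, hM]
    simp only [eval_sub, eval_X, eval_C]
    rw [← Finset.prod_mul_distrib]
    exact Finset.prod_congr rfl fun i _ => hrel i
  set Pi := r.coeff 0 with hPi
  have hPiK : Pi ∈ K₀ := by
    rw [hPi, hr, coeff_zero_eq_eval_zero, eval_prod]
    exact prod_mem fun i _ => by
      simpa using K₀.sub_mem K₀.zero_mem (hαK i)
  set σ := ∑ j ∈ S, α j with hσ
  have hσK : σ ∈ K₀ := sum_mem fun i _ => hαK i
  have hrtop : r.coeff s = 1 := by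
    have h := hrm.coeff_natDegree
    rwa [hrdeg] at h
  have hr1 : r.coeff (s + 1) = 0 := coeff_eq_zero_of_natDegree_lt (by omega)
  have hr2 : r.coeff (s + 2) = 0 := coeff_eq_zero_of_natDegree_lt (by omega)
  have hrX : (r * X).coeff s = -σ := prod_mul_X_coeff S α
  have hrX1 : (r * X).coeff (s + 1) = 1 := by rw [coeff_mul_X]; exact hrtop
  have hrX2 : (r * X).coeff (s + 2) = 0 := by rw [coeff_mul_X]; exact hr1
  have hrX0 : (r * X).coeff 0 = 0 := by simp [mul_coeff_zero]
  have hrXX : r * X ^ 2 = r * X * X := by ring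
  have hrXX1 : (r * X ^ 2).coeff (s + 1) = -σ := by rw [hrXX, coeff_mul_X]; exact hrX
  have hrXX2 : (r * X ^ 2).coeff (s + 2) = 1 := by rw [hrXX, coeff_mul_X]; exact hrX1
  have hrXX0 : (r * X ^ 2).coeff 0 = 0 := by simp [hrXX, mul_coeff_zero]
  have hEval : g.eval b = lam * g.eval c → M * q.eval b = lam * q.eval c := by
    intro h
    apply mul_left_cancel₀ hrevalc
    rw [hgq] at h
    simp only [eval_mul] at h
    rw [hrevalb] at h
    linear_combination h
  have fact1 : s = k → False := by
    intro hsk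
    have hqd : q.natDegree = 0 := by omega
    have hqC : q = C (q.coeff 0) := eq_C_of_natDegree_le_zero (le_of_eq hqd)
    set v := q.coeff 0 with hv
    have hv0 : v ≠ 0 := fun h => hq0 (by rw [hqC, h, C_0])
    have hg2 : g = C v * r := by rw [hgq, hqC]; ring
    have hck : g.coeff k = v := by rw [hg2, coeff_C_mul, ← hsk, hrtop, mul_one]
    have hc0 : g.coeff 0 = v * Pi := by rw [hg2, coeff_C_mul, hPi]
    rw [hck, hc0] at htw
    have h2 : v * (η * Pi - 1) = 0 := by linear_combination -htw
    rcases mul_eq_zero.mp h2 with h | h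
    · exact hv0 h
    · exact eta_contra K₀ hη hPiK K₀.one_mem one_ne_zero (sub_eq_zero.mp h)
  have fact2 : k = s + 1 → g.eval b = lam * g.eval c → False := by
    intro hsk heval
    have hqd : q.natDegree ≤ 1 := by omega
    have hqC : q = C (q.coeff 1) * X + C (q.coeff 0) := eq_X_add_C_of_natDegree_le_one hqd
    set w := q.coeff 1 with hw
    set v := q.coeff 0 with hv
    have hg2 : g = C w * (r * X) + C v * r := by rw [hgq, hqC]; ring
    have hck : g.coeff k = w := by
      rw [hg2, hsk, coeff_add, coeff_C_mul, coeff_C_mul, hrX1, hr1]; ring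
    have hc0 : g.coeff 0 = v * Pi := by
      rw [hg2, coeff_add, coeff_C_mul, coeff_C_mul, hrX0, hPi]; ring
    rw [hck, hc0] at htw
    have hE0 := hEval heval
    rw [hqC] at hE0
    simp only [eval_add, eval_mul, eval_C, eval_X] at hE0
    by_cases hw0 : w = 0
    · have hv0 : v ≠ 0 := fun h => hq0 (by rw [hqC, hw0, h]; simp)
      rw [hw0] at hE0
      have h2 : v * (lam - M) = 0 := by linear_combination -hE0
      rcases mul_eq_zero.mp h2 with h | h
      · exact hv0 h
      · exact hlamM' h
    · have hv0 : v ≠ 0 := fun h => hw0 (by rw [h] at htw; simpa using htw)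
      have h2 : v * (η * (Pi * (M * b - lam * c)) - (lam - M)) = 0 := by
        linear_combination hE0 - (M * b - lam * c) * htw
      rcases mul_eq_zero.mp h2 with h | h
      · exact hv0 h
      · refine eta_contra K₀ hη ?_ (K₀.sub_mem hlamK hMK) hlamM' (sub_eq_zero.mp h)
        exact K₀.mul_mem hPiK (K₀.sub_mem (K₀.mul_mem hMK hbK) (K₀.mul_mem hlamK hcK))
  have fact3 : k = s + 1 → g.coeff (k - 1) = 0 → False := by
    intro hsk hcoeff
    have hqd : q.natDegree ≤ 1 := by omega
    have hqC : q = C (q.coeff 1) * X + C (q.coeff 0) := eq_X_add_C_of_natDegree_le_one hqd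
    set w := q.coeff 1 with hw
    set v := q.coeff 0 with hv
    have hg2 : g = C w * (r * X) + C v * r := by rw [hgq, hqC]; ring
    have hck : g.coeff k = w := by
      rw [hg2, hsk, coeff_add, coeff_C_mul, coeff_C_mul, hrX1, hr1]; ring
    have hc0 : g.coeff 0 = v * Pi := by
      rw [hg2, coeff_add, coeff_C_mul, coeff_C_mul, hrX0, hPi]; ring
    rw [hck, hc0] at htw
    have hcs : g.coeff s = w * (-σ) + v := by
      rw [hg2, coeff_add, coeff_C_mul, coeff_C_mul, hrX, hrtop]; ring
    rw [show k - 1 = s by omega, hcs] at hcoeff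
    by_cases hw0 : w = 0
    · have hv0 : v = 0 := by rw [hw0] at hcoeff; linear_combination hcoeff
      exact hq0 (by rw [hqC, hw0, hv0]; simp)
    · have h2 : w * (η * (σ * Pi) - 1) = 0 := by
        linear_combination -htw - η * Pi * hcoeff
      rcases mul_eq_zero.mp h2 with h | h
      · exact hw0 h
      · exact eta_contra K₀ hη (K₀.mul_mem hσK hPiK) K₀.one_mem one_ne_zero (sub_eq_zero.mp h)
  have fact4 : k = s + 2 → g.coeff (k - 1) = 0 → g.eval b = lam * g.eval c → False := by
    intro hsk hcoeff heval
    have hqd : q.natDegree ≤ 2 := by omega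
    have hqC : q = C (q.coeff 2) * X ^ 2 + C (q.coeff 1) * X + C (q.coeff 0) :=
      eq_quad q hqd
    set u := q.coeff 2 with hu
    set w := q.coeff 1 with hw
    set v := q.coeff 0 with hv
    have hg2 : g = C u * (r * X ^ 2) + C w * (r * X) + C v * r := by rw [hgq, hqC]; ring
    have hck : g.coeff k = u := by
      rw [hg2, hsk, coeff_add, coeff_add, coeff_C_mul, coeff_C_mul, coeff_C_mul,
        hrXX2, hrX2, hr2]; ring
    have hc0 : g.coeff 0 = v * Pi := by
      rw [hg2, coeff_add, coeff_add, coeff_C_mul, coeff_C_mul, coeff_C_mul,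
        hrXX0, hrX0, hPi]; ring
    rw [hck, hc0] at htw
    have hcs : g.coeff (s + 1) = u * (-σ) + w := by
      rw [hg2, coeff_add, coeff_add, coeff_C_mul, coeff_C_mul, coeff_C_mul,
        hrXX1, hrX1, hr1]; ring
    rw [show k - 1 = s + 1 by omega, hcs] at hcoeff
    have hE0 := hEval heval
    rw [hqC] at hE0
    simp only [eval_add, eval_mul, eval_C, eval_X, eval_pow] at hE0
    by_cases hu0 : u = 0
    · have hw0 : w = 0 := by rw [hu0] at hcoeff; linear_combination hcoeff
      have hv0 : v ≠ 0 := fun h => hq0 (by rw [hqC, hu0, hw0, h]; simp)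
      rw [hu0, hw0] at hE0
      have h2 : v * (lam - M) = 0 := by linear_combination -hE0
      rcases mul_eq_zero.mp h2 with h | h
      · exact hv0 h
      · exact hlamM' h
    · have hv0 : v ≠ 0 := fun h => hu0 (by rw [h] at htw; simpa using htw)
      have h2 : v * (η * (Pi * (M * (b ^ 2 + σ * b) - lam * (c ^ 2 + σ * c))) - (lam - M)) = 0 := by
        linear_combination hE0 - (M * b - lam * c) * hcoeff -
          (M * (b ^ 2 + σ * b) - lam * (c ^ 2 + σ * c)) * htw
      rcases mul_eq_zero.mp h2 with h | h
      · exact hv0 h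
      · refine eta_contra K₀ hη ?_ (K₀.sub_mem hlamK hMK) hlamM' (sub_eq_zero.mp h)
        refine K₀.mul_mem hPiK (K₀.sub_mem (K₀.mul_mem hMK ?_) (K₀.mul_mem hlamK ?_))
        · exact K₀.add_mem (K₀.pow_mem hbK 2) (K₀.mul_mem hσK hbK)
        · exact K₀.add_mem (K₀.pow_mem hcK 2) (K₀.mul_mem hσK hcK)
  refine ⟨?_, ?_, ?_, ?_⟩
  · by_contra h
    exact fact1 (by omega)
  · intro heval
    by_contra h
    rcases (by omega : s = k ∨ k = s + 1) with h1 | h1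
    · exact fact1 h1
    · exact fact2 h1 heval
  · intro hcoeff
    by_contra h
    rcases (by omega : s = k ∨ k = s + 1) with h1 | h1
    · exact fact1 h1
    · exact fact3 h1 hcoeff
  · intro hcoeff heval
    by_contra h
    rcases (by omega : s = k ∨ k = s + 1 ∨ k = s + 2) with h1 | h1 | h1
    · exact fact1 h1
    · exact fact2 h1 heval
    · exact fact4 h1 hcoeff heval

end CoreProof

noncomputable section AuxProof
open scoped Classical
variable {F : Type*} [Field F]

lemma myWt_eq_card {n : ℕ} (x : Fin n → F) :
    wt x = (univ.filter fun i => x i ≠ 0).card := by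
  rw [wt, Nat.card_eq_fintype_card, Fintype.card_subtype]

lemma myWt_snoc {n : ℕ} (y : Fin n → F) (a : F) :
    wt (Fin.snoc y a) = wt y + if a ≠ 0 then 1 else 0 := by
  rw [myWt_eq_card, myWt_eq_card, Finset.card_filter, Finset.card_filter,
    Fin.sum_univ_castSucc]
  simp

lemma myWt_add_zeros {n : ℕ} (y : Fin n → F) :
    wt y + (univ.filter fun i => y i = 0).card = n := by
  rw [myWt_eq_card]
  simpa using Finset.card_filter_add_card_filter_not
    (s := (univ : Finset (Fin n))) (p := fun i => y i ≠ 0)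

lemma twPoly_coeff {k : ℕ} (η : F) (f : Fin k → F) (j : ℕ) (hj : j < k) :
    (twPoly k 1 0 η f).coeff j = f ⟨j, hj⟩ := by
  have hk : 0 < k := by omega
  have hkk : k - 1 + 1 = k := by omega
  rw [twPoly, coeff_add, finset_sum_coeff, dif_pos hk, hkk]
  simp only [coeff_C_mul, coeff_X_pow]
  rw [if_neg (by omega : ¬ j = k), mul_zero, add_zero,
    Finset.sum_eq_single (⟨j, hj⟩ : Fin k)]
  · simp
  · intro i _ hne
    rw [if_neg, mul_zero]
    exact fun h => hne (Fin.ext h.symm)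
  · simp

lemma twPoly_coeff_top {k : ℕ} (hk : 0 < k) (η : F) (f : Fin k → F) :
    (twPoly k 1 0 η f).coeff k = η * f ⟨0, hk⟩ := by
  have hkk : k - 1 + 1 = k := by omega
  rw [twPoly, coeff_add, finset_sum_coeff, dif_pos hk, hkk]
  simp only [coeff_C_mul, coeff_X_pow, if_pos rfl, mul_one]
  rw [Finset.sum_eq_zero (fun i _ => by
    rw [if_neg (by omega : ¬ k = (i : ℕ)), mul_zero]), zero_add]
  simp

lemma twPoly_natDegree_le {k : ℕ} (η : F) (f : Fin k → F) (hk : 0 < k) :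
    (twPoly k 1 0 η f).natDegree ≤ k := by
  refine (natDegree_add_le _ _).trans (max_le ?_ ?_)
  · exact natDegree_sum_le_of_forall_le _ _ fun i _ =>
      (natDegree_C_mul_X_pow_le _ _).trans (by omega)
  · exact (natDegree_C_mul_X_pow_le _ _).trans (by omega)

lemma twPoly_ne_zero {k : ℕ} (η : F) (f : Fin k → F) (hf : f ≠ 0) :
    twPoly k 1 0 η f ≠ 0 := by
  intro h
  apply hf
  funext j
  have hh := twPoly_coeff η f j j.2
  rw [Fin.eta] at hh
  rw [← hh, h, coeff_zero]
  rfl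

lemma twPoly_add {k t h : ℕ} (η : F) (f g : Fin k → F) :
    twPoly k t h η (f + g) = twPoly k t h η f + twPoly k t h η g := by
  unfold twPoly
  split_ifs <;> simp [C_add, add_mul, mul_add, Finset.sum_add_distrib] <;> ring

lemma twPoly_smul {k t h : ℕ} (η : F) (a : F) (f : Fin k → F) :
    twPoly k t h η (a • f) = C a * twPoly k t h η f := by
  unfold twPoly
  split_ifs <;>
    · simp only [Pi.smul_apply, smul_eq_mul, C_mul, Finset.mul_sum, mul_add, mul_zero]
      exact congrArg₂ (· + ·) (Finset.sum_congr rfl fun x _ => by ring) (by first | ring1 | simp)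

lemma topCoeffFin_add {k : ℕ} (f g : Fin k → F) :
    topCoeffFin (f + g) = topCoeffFin f + topCoeffFin g := by
  unfold topCoeffFin
  split_ifs <;> simp

lemma topCoeffFin_smul {k : ℕ} (a : F) (f : Fin k → F) :
    topCoeffFin (a • f) = a * topCoeffFin f := by
  unfold topCoeffFin
  split_ifs <;> simp

/-- The evaluation linear map whose range is `RCTRS`. -/
def rcMap (k : ℕ) (η : F) {m : ℕ} (α : Fin m → F) (b c lam : F) :
    (Fin k → F) →ₗ[F] (Fin (m + 1) → F) where
  toFun f := Fin.snoc (fun i => (twPoly k 1 0 η f).eval (α i))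
    ((twPoly k 1 0 η f).eval b - lam * (twPoly k 1 0 η f).eval c)
  map_add' f g := by
    funext i
    refine Fin.lastCases ?_ (fun j => ?_) i
    · simp [Fin.snoc_last, twPoly_add]; ring
    · simp [Fin.snoc_castSucc, twPoly_add]
  map_smul' a f := by
    funext i
    refine Fin.lastCases ?_ (fun j => ?_) i
    · simp [Fin.snoc_last, twPoly_smul]; ring
    · simp [Fin.snoc_castSucc, twPoly_smul]

/-- The evaluation linear map whose range is `RCTRSext`. -/
def rcMapExt (k : ℕ) (η : F) {m : ℕ} (α : Fin m → F) (b c lam : F) :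
    (Fin k → F) →ₗ[F] (Fin (m + 2) → F) where
  toFun f := Fin.snoc (Fin.snoc (fun i => (twPoly k 1 0 η f).eval (α i))
    ((twPoly k 1 0 η f).eval b - lam * (twPoly k 1 0 η f).eval c)) (topCoeffFin f)
  map_add' f g := by
    funext i
    refine Fin.lastCases ?_ (fun j => ?_) i
    · simp [Fin.snoc_last, topCoeffFin_add]
    · refine Fin.lastCases ?_ (fun j' => ?_) j
      · simp [Fin.snoc_last, Fin.snoc_castSucc, twPoly_add]; ring
      · simp [Fin.snoc_castSucc, twPoly_add]
  map_smul' a f := by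
    funext i
    refine Fin.lastCases ?_ (fun j => ?_) i
    · simp [Fin.snoc_last, topCoeffFin_smul]
    · refine Fin.lastCases ?_ (fun j' => ?_) j
      · simp [Fin.snoc_last, Fin.snoc_castSucc, twPoly_smul]; ring
      · simp [Fin.snoc_castSucc, twPoly_smul]

lemma RCTRS_eq_range {k m : ℕ} (η : F) (α : Fin m → F) (b c lam : F) :
    RCTRS k 1 0 η α b c lam = LinearMap.range (rcMap k η α b c lam) := by
  have hset : rctrsWords k 1 0 η α b c lam = Set.range (rcMap k η α b c lam) := by
    ext w
    constructor
    · rintro ⟨f, hf⟩; exact ⟨f, hf.symm⟩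
    · rintro ⟨f, hf⟩; exact ⟨f, hf.symm⟩
  rw [RCTRS, hset, ← LinearMap.coe_range, Submodule.span_eq]

lemma RCTRSext_eq_range {k m : ℕ} (η : F) (α : Fin m → F) (b c lam : F) :
    RCTRSext k 1 0 η α b c lam = LinearMap.range (rcMapExt k η α b c lam) := by
  have hset : rctrsWordsExt k 1 0 η α b c lam = Set.range (rcMapExt k η α b c lam) := by
    ext w
    constructor
    · rintro ⟨f, hf⟩; exact ⟨f, hf.symm⟩
    · rintro ⟨f, hf⟩; exact ⟨f, hf.symm⟩
  rw [RCTRSext, hset, ← LinearMap.coe_range, Submodule.span_eq]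

end AuxProof

theorem stmt7 {F : Type*} [Field F] [Fintype F] (K₀ : Subfield F)
    (G : Subgroup Fˣ) {m k : ℕ} (μ : Fin m → F)
    (hGcard : Nat.card G = m + 1)
    (hGK : ∀ g : Fˣ, g ∈ G → (g : F) ∈ K₀)
    (hμinj : Function.Injective μ) (hμ1 : ∀ i, μ i ≠ 1)
    (hGenum : unitsImage G = insert (1 : F) (Set.range μ))
    (b c : F) (hb : b ∈ K₀) (hc : c ∈ K₀) (hbc : b ≠ c)
    (α : Fin m → F) (hα : ∀ i, α i = (b - μ i * c) / (1 - μ i))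
    (hk0 : 0 < k) (hkn : k ≤ m + 1)
    (lam : F) (hlamK : lam ∈ K₀) (hlamG : lam ∉ unitsImage G)
    (η : F) (hη : η = 0 ∨ η ∉ K₀) :
    Function.Injective α ∧
    IsMDS (RCTRS k 1 0 η α b c lam) k ∧
    IsMDS (RCTRSext k 1 0 η α b c lam) k := by
  classical
  have hμU : ∀ i, μ i ∈ unitsImage G := fun i => by
    rw [hGenum]; exact Set.mem_insert_iff.mpr (Or.inr ⟨i, rfl⟩)
  have h1U : (1 : F) ∈ unitsImage G := ⟨1, G.one_mem, Units.val_one⟩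
  have hUmul : ∀ x ∈ unitsImage G, ∀ y ∈ unitsImage G, x * y ∈ unitsImage G := by
    rintro x ⟨gx, hgx, rfl⟩ y ⟨gy, hgy, rfl⟩
    exact ⟨gx * gy, G.mul_mem hgx hgy, Units.val_mul gx gy⟩
  have hμK : ∀ i, μ i ∈ K₀ := fun i => by
    obtain ⟨g, hg, hE⟩ := hμU i
    rw [← hE]; exact hGK g hg
  have hone : ∀ i, (1 : F) - μ i ≠ 0 := fun i => sub_ne_zero_of_ne (Ne.symm (hμ1 i))
  have hcb : c - b ≠ 0 := sub_ne_zero_of_ne (Ne.symm hbc)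
  have hαmul : ∀ i, α i * (1 - μ i) = b - μ i * c := fun i => by
    rw [hα i]; exact div_mul_cancel₀ _ (hone i)
  have hcα : ∀ i, c - α i = (c - b) / (1 - μ i) := fun i => by
    rw [eq_div_iff (hone i)]; linear_combination -(hαmul i)
  have hcne : ∀ i, c - α i ≠ 0 := fun i => by
    rw [hcα i]; exact div_ne_zero hcb (hone i)
  have hrel : ∀ i, b - α i = μ i * (c - α i) := fun i => by
    linear_combination -(hαmul i)
  have hαK : ∀ i, α i ∈ K₀ := fun i => by
    rw [hα i]
    exact K₀.div_mem (K₀.sub_mem hb (K₀.mul_mem (hμK i) hc))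
      (K₀.sub_mem K₀.one_mem (hμK i))
  have hαinj : Function.Injective α := by
    intro i j hij
    have h1 : b - α i = b - α j := by rw [hij]
    rw [hrel i, hrel j, ← hij] at h1
    have h2 : (μ i - μ j) * (c - α i) = 0 := by linear_combination h1
    rcases mul_eq_zero.mp h2 with h | h
    · exact hμinj (sub_eq_zero.mp h)
    · exact absurd h (hcne i)
  have hcore := core K₀ (unitsImage G) α μ b c lam η hαK hμU hμK hrel hcne hUmul h1U
    hlamG hb hc hlamK hη hk0 hαinj
  have htwOf : ∀ f : Fin k → F,
      (twPoly k 1 0 η f).coeff k = η * (twPoly k 1 0 η f).coeff 0 := fun f => by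
    rw [twPoly_coeff_top hk0, twPoly_coeff η f 0 hk0]
  have hcoefOf : ∀ f : Fin k → F, topCoeffFin f = 0 → (twPoly k 1 0 η f).coeff (k - 1) = 0 := by
    intro f hd
    rw [twPoly_coeff η f (k - 1) (by omega)]
    rw [topCoeffFin, dif_pos (by omega : k - 1 < k)] at hd
    exact hd
  -- injectivity of the two evaluation maps
  have hker : ∀ f : Fin k → F, rcMap k η α b c lam f = 0 → f = 0 := by
    intro f hf0
    by_contra hf
    have hg := twPoly_ne_zero η f hf
    have hroots : ∀ j ∈ (univ : Finset (Fin m)), (twPoly k 1 0 η f).eval (α j) = 0 := by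
      intro j _
      have h := congrFun hf0 (Fin.castSucc j)
      simpa [rcMap, Fin.snoc_castSucc] using h
    have heval : (twPoly k 1 0 η f).eval b = lam * (twPoly k 1 0 η f).eval c := by
      have h := congrFun hf0 (Fin.last m)
      have h' : (twPoly k 1 0 η f).eval b - lam * (twPoly k 1 0 η f).eval c = 0 := by
        simpa [rcMap, Fin.snoc_last] using h
      exact sub_eq_zero.mp h'
    have hb2 := (hcore _ hg (twPoly_natDegree_le η f hk0) (htwOf f) univ hroots).2.1 heval
    rw [Finset.card_univ, Fintype.card_fin] at hb2
    omega
  have hkerExt : ∀ f : Fin k → F, rcMapExt k η α b c lam f = 0 → f = 0 := by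
    intro f hf0
    by_contra hf
    have hg := twPoly_ne_zero η f hf
    have hroots : ∀ j ∈ (univ : Finset (Fin m)), (twPoly k 1 0 η f).eval (α j) = 0 := by
      intro j _
      have h := congrFun hf0 (Fin.castSucc (Fin.castSucc j))
      simpa [rcMapExt, Fin.snoc_castSucc] using h
    have heval : (twPoly k 1 0 η f).eval b = lam * (twPoly k 1 0 η f).eval c := by
      have h := congrFun hf0 (Fin.castSucc (Fin.last m))
      have h' : (twPoly k 1 0 η f).eval b - lam * (twPoly k 1 0 η f).eval c = 0 := by
        simpa [rcMapExt, Fin.snoc_castSucc, Fin.snoc_last] using h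
      exact sub_eq_zero.mp h'
    have hb2 := (hcore _ hg (twPoly_natDegree_le η f hk0) (htwOf f) univ hroots).2.1 heval
    rw [Finset.card_univ, Fintype.card_fin] at hb2
    omega
  have hinj : Function.Injective (rcMap k η α b c lam) :=
    LinearMap.ker_eq_bot.mp (LinearMap.ker_eq_bot'.mpr hker)
  have hinjExt : Function.Injective (rcMapExt k η α b c lam) :=
    LinearMap.ker_eq_bot.mp (LinearMap.ker_eq_bot'.mpr hkerExt)
  refine ⟨hαinj, ⟨?_, ?_⟩, ⟨?_, ?_⟩⟩
  · rw [RCTRS_eq_range, LinearMap.finrank_range_of_inj hinj, Module.finrank_pi,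
      Fintype.card_fin]
  · intro x hx hne
    rw [RCTRS_eq_range] at hx
    obtain ⟨f, rfl⟩ := hx
    have hf : f ≠ 0 := fun h => hne (by rw [h, map_zero])
    set g := twPoly k 1 0 η f with hgdef
    set y : Fin m → F := fun i => g.eval (α i) with hy
    set a : F := g.eval b - lam * g.eval c with ha
    have hxw : rcMap k η α b c lam f = Fin.snoc y a := rfl
    rw [hxw, myWt_snoc]
    have hwz := myWt_add_zeros y
    set S := univ.filter (fun i => y i = 0) with hS
    have hroots : ∀ j ∈ S, g.eval (α j) = 0 := fun j hj => (mem_filter.mp hj).2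
    have hfacts := hcore g (twPoly_ne_zero η f hf) (twPoly_natDegree_le η f hk0)
      (htwOf f) S hroots
    by_cases ha0 : a = 0
    · have hlt := hfacts.2.1 (sub_eq_zero.mp ha0)
      rw [if_neg (not_not_intro ha0)]
      omega
    · have hlt := hfacts.1
      rw [if_pos ha0]
      omega
  · rw [RCTRSext_eq_range, LinearMap.finrank_range_of_inj hinjExt, Module.finrank_pi,
      Fintype.card_fin]
  · intro x hx hne
    rw [RCTRSext_eq_range] at hx
    obtain ⟨f, rfl⟩ := hx
    have hf : f ≠ 0 := fun h => hne (by rw [h, map_zero])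
    set g := twPoly k 1 0 η f with hgdef
    set y : Fin m → F := fun i => g.eval (α i) with hy
    set a : F := g.eval b - lam * g.eval c with ha
    set d : F := topCoeffFin f with hd
    have hxw : rcMapExt k η α b c lam f = Fin.snoc (Fin.snoc y a) d := rfl
    rw [hxw, myWt_snoc, myWt_snoc]
    have hwz := myWt_add_zeros y
    set S := univ.filter (fun i => y i = 0) with hS
    have hroots : ∀ j ∈ S, g.eval (α j) = 0 := fun j hj => (mem_filter.mp hj).2
    have hfacts := hcore g (twPoly_ne_zero η f hf) (twPoly_natDegree_le η f hk0)
      (htwOf f) S hroots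
    by_cases hd0 : d = 0 <;> by_cases ha0 : a = 0
    · have hlt := hfacts.2.2.2 (hcoefOf f hd0) (sub_eq_zero.mp ha0)
      rw [if_neg (not_not_intro ha0), if_neg (not_not_intro hd0)]
      omega
    · have hlt := hfacts.2.2.1 (hcoefOf f hd0)
      rw [if_pos ha0, if_neg (not_not_intro hd0)]
      omega
    · have hlt := hfacts.2.1 (sub_eq_zero.mp ha0)
      rw [if_neg (not_not_intro ha0), if_pos hd0]
      omega
    · have hlt := hfacts.1
      rw [if_pos ha0, if_pos hd0]
      omega
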